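/- There exists a universal constant C > 0 such that the following holds. Let P = X Xᵀ ∈ ℝ^{n×n} be a rank-d positive semidefinite matrix as in the context, with top-d eigenvector matrix U_P ∈ ℝ^{n×d}, and let M ∈ ℝ^{n×n} be a symmetric matrix whose d eigenvectors corresponding to its d largest eigenvalues form the columns of an orthonormal matrix U_M ∈ ℝ^{n×d}. Then there exists an orthogonal matrix V ∈ ℝ^{d×d} (one may take V = V₁V₂ᵀ, where U_Pᵀ U_M = V₁ D V₂ᵀ is a singular value decomposition) such that ‖U_Pᵀ U_M − V‖_F ≤ C d ‖M − P‖² / λ_d(P)². -/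

import Mathlib

open Matrix
open scoped BigOperators

/-- The Frobenius norm of a real matrix. -/
noncomputable def frobNorm {m n : ℕ} (M : Matrix (Fin m) (Fin n) ℝ) : ℝ :=
  Real.sqrt (∑ i, ∑ j, (M i j) ^ 2)

/-- The spectral (ℓ2 operator) norm of a real square matrix. -/
noncomputable def specNorm {n : ℕ} (M : Matrix (Fin n) (Fin n) ℝ) : ℝ :=
  ‖Matrix.toEuclideanCLM (𝕜 := ℝ) M‖

/-- The first `d` columns of an `n × n` matrix. -/
def topCols {n d : ℕ} (hdn : d ≤ n) (W : Matrix (Fin n) (Fin n) ℝ) :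
    Matrix (Fin n) (Fin d) ℝ :=
  W.submatrix id (Fin.castLE hdn)

lemma pb_dotT {n m : ℕ} (A : Matrix (Fin n) (Fin m) ℝ) (x : Fin m → ℝ) (y : Fin n → ℝ) :
    (A *ᵥ x) ⬝ᵥ y = x ⬝ᵥ (Aᵀ *ᵥ y) := by
  rw [dotProduct_comm, dotProduct_mulVec, mulVec_transpose, dotProduct_comm]

lemma pb_isom {n m : ℕ} (U : Matrix (Fin n) (Fin m) ℝ) (hU : Uᵀ * U = 1) (c : Fin m → ℝ) :
    (U *ᵥ c) ⬝ᵥ (U *ᵥ c) = c ⬝ᵥ c := by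
  rw [pb_dotT, mulVec_mulVec, hU, one_mulVec]

lemma pb_dot_nonneg {m : ℕ} (x : Fin m → ℝ) : 0 ≤ x ⬝ᵥ x :=
  Finset.sum_nonneg fun _ _ => mul_self_nonneg _

lemma pb_dot_pos {m : ℕ} (x : Fin m → ℝ) (hx : x ≠ 0) : 0 < x ⬝ᵥ x := by
  rcases Function.ne_iff.mp hx with ⟨i, hi⟩
  refine Finset.sum_pos' (fun j _ => mul_self_nonneg _) ⟨i, Finset.mem_univ i, ?_⟩
  exact mul_self_pos.mpr hi

lemma pb_specBound {n : ℕ} (N : Matrix (Fin n) (Fin n) ℝ) (x : Fin n → ℝ) :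
    (N *ᵥ x) ⬝ᵥ (N *ᵥ x) ≤ specNorm N ^ 2 * (x ⬝ᵥ x) := by
  have h := (Matrix.toEuclideanCLM (𝕜 := ℝ) N).le_opNorm ((WithLp.equiv 2 _).symm x)
  change ‖(WithLp.equiv 2 (Fin n → ℝ)).symm (toLin' N x)‖ ≤
    ‖toEuclideanCLM (𝕜 := ℝ) N‖ * ‖(WithLp.equiv 2 (Fin n → ℝ)).symm x‖ at h
  have hx : ‖(WithLp.equiv 2 (Fin n → ℝ)).symm x‖ = Real.sqrt (x ⬝ᵥ x) := by
    rw [EuclideanSpace.norm_eq]; congr 1; simp [dotProduct, sq]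
  have hy : ‖(WithLp.equiv 2 (Fin n → ℝ)).symm (toLin' N x)‖
      = Real.sqrt ((N *ᵥ x) ⬝ᵥ (N *ᵥ x)) := by
    rw [EuclideanSpace.norm_eq]; congr 1; simp [dotProduct, sq, Matrix.toLin'_apply]
  rw [hy, hx] at h
  have h2 : ‖toEuclideanCLM (𝕜 := ℝ) N‖ = specNorm N := rfl
  rw [h2] at h
  have h3 := mul_self_le_mul_self (Real.sqrt_nonneg ((N *ᵥ x) ⬝ᵥ (N *ᵥ x))) h
  rw [Real.mul_self_sqrt (pb_dot_nonneg _)] at h3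
  calc (N *ᵥ x) ⬝ᵥ (N *ᵥ x) ≤ _ := h3
    _ = specNorm N ^ 2 * (x ⬝ᵥ x) := by
        rw [mul_mul_mul_comm, Real.mul_self_sqrt (pb_dot_nonneg x), sq]

lemma pb_spec_nonneg {n : ℕ} (N : Matrix (Fin n) (Fin n) ℝ) : 0 ≤ specNorm N :=
  norm_nonneg _

lemma pb_cs {m : ℕ} (x y : Fin m → ℝ) : (x ⬝ᵥ y)^2 ≤ (x ⬝ᵥ x) * (y ⬝ᵥ y) := by
  have h := Finset.sum_mul_sq_le_sq_mul_sq Finset.univ x y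
  simpa [dotProduct, sq] using h

lemma pb_proj_split {n d : ℕ} (UP : Matrix (Fin n) (Fin d) ℝ) (hUP : UPᵀ * UP = 1)
    (v : Fin n → ℝ) :
    (UPᵀ *ᵥ v) ⬝ᵥ (UPᵀ *ᵥ v) + (v - (UP * UPᵀ) *ᵥ v) ⬝ᵥ (v - (UP * UPᵀ) *ᵥ v) = v ⬝ᵥ v := by
  set q := (UP * UPᵀ) *ᵥ v with hq
  have hq2 : q = UP *ᵥ (UPᵀ *ᵥ v) := by rw [hq, mulVec_mulVec]
  have a1 : (UPᵀ *ᵥ v) ⬝ᵥ (UPᵀ *ᵥ v) = v ⬝ᵥ q := by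
    rw [pb_dotT, transpose_transpose, ← hq2]
  have a2 : q ⬝ᵥ q = v ⬝ᵥ q := by
    have : q ⬝ᵥ q = (UPᵀ *ᵥ v) ⬝ᵥ (UPᵀ *ᵥ v) := by rw [hq2]; exact pb_isom UP hUP _
    rw [this, a1]
  have e1 : (v - q) ⬝ᵥ (v - q) = v ⬝ᵥ v - 2 * (v ⬝ᵥ q) + q ⬝ᵥ q := by
    rw [sub_dotProduct, dotProduct_sub, dotProduct_sub, dotProduct_comm q v]; ring
  rw [a1, e1, a2]; ring

lemma pb_sumsq_cols {m n : ℕ} (X : Matrix (Fin m) (Fin n) ℝ) :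
    ∑ i, ∑ j, (X i j)^2 = ∑ j, (X *ᵥ Pi.single j 1) ⬝ᵥ (X *ᵥ Pi.single j 1) := by
  rw [Finset.sum_comm]
  refine Finset.sum_congr rfl fun j _ => ?_
  simp [dotProduct, mulVec_single, sq]

lemma pb_single_dot {m : ℕ} (j : Fin m) : (Pi.single j 1 : Fin m → ℝ) ⬝ᵥ Pi.single j 1 = 1 := by
  simp [dotProduct, Pi.single_apply]

lemma pb_sum_sq_le_sq_sum {d : ℕ} (f : Fin d → ℝ) (hf : ∀ i, 0 ≤ f i) :
    ∑ i, (f i)^2 ≤ (∑ i, f i)^2 := by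
  calc ∑ i, (f i)^2 ≤ ∑ i, f i * ∑ j, f j := by
        refine Finset.sum_le_sum fun i _ => ?_
        have h1 : f i ≤ ∑ j, f j :=
          Finset.single_le_sum (fun j _ => hf j) (Finset.mem_univ i)
        nlinarith [hf i]
    _ = (∑ i, f i)^2 := by rw [← Finset.sum_mul]; ring

lemma pb_frob_le {m n : ℕ} (M : Matrix (Fin m) (Fin n) ℝ) (b : ℝ) (hb : 0 ≤ b)
    (h : ∑ i, ∑ j, (M i j)^2 ≤ b^2) : frobNorm M ≤ b := by
  rw [frobNorm]
  calc Real.sqrt (∑ i, ∑ j, (M i j)^2) ≤ Real.sqrt (b^2) := Real.sqrt_le_sqrt h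
    _ = b := Real.sqrt_sq hb

lemma pb_conjMul {d : ℕ} (O : Matrix (Fin d) (Fin d) ℝ) (hO : Oᵀ * O = 1)
    (g h : Fin d → ℝ) :
    (O * diagonal g * Oᵀ) * (O * diagonal h * Oᵀ)
      = O * diagonal (fun i => g i * h i) * Oᵀ := by
  have : diagonal g * diagonal h = diagonal (fun i => g i * h i) := by
    rw [diagonal_mul_diagonal]
  calc (O * diagonal g * Oᵀ) * (O * diagonal h * Oᵀ)
      = O * diagonal g * (Oᵀ * O) * diagonal h * Oᵀ := by
        simp only [Matrix.mul_assoc]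
    _ = O * (diagonal g * diagonal h) * Oᵀ := by
        rw [hO]; simp only [Matrix.mul_one, Matrix.mul_assoc]
    _ = O * diagonal (fun i => g i * h i) * Oᵀ := by rw [this]

lemma pb_conj_sumsq {d : ℕ} (O : Matrix (Fin d) (Fin d) ℝ) (hO : Oᵀ * O = 1)
    (g : Fin d → ℝ) :
    ∑ i, ∑ j, ((O * diagonal g * Oᵀ) i j)^2 = ∑ i, (g i)^2 := by
  rw [pb_sumsq_cols]
  have hcol : ∀ j, ((O * diagonal g * Oᵀ) *ᵥ Pi.single j 1)
      ⬝ᵥ ((O * diagonal g * Oᵀ) *ᵥ Pi.single j 1) = ∑ i, (g i)^2 * (O j i)^2 := by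
    intro j
    have h1 : (O * diagonal g * Oᵀ) *ᵥ Pi.single j 1
        = O *ᵥ (diagonal g *ᵥ (Oᵀ *ᵥ Pi.single j 1)) := by
      rw [Matrix.mul_assoc, ← mulVec_mulVec, ← mulVec_mulVec]
    rw [h1, pb_isom O hO]
    have h2 : (Oᵀ *ᵥ Pi.single j 1) = fun i => O j i := by
      funext i; simp [mulVec_single]
    rw [h2]
    simp [dotProduct, mulVec_diagonal, sq]; ring_nf
  rw [Finset.sum_congr rfl fun j _ => hcol j, Finset.sum_comm]
  refine Finset.sum_congr rfl fun i _ => ?_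
  rw [← Finset.mul_sum]
  have : ∑ j, (O j i)^2 = 1 := by
    have h := congrFun (congrFun hO i) i
    simp only [Matrix.mul_apply, transpose_apply, Matrix.one_apply_eq] at h
    rw [← h]
    exact Finset.sum_congr rfl fun j _ => (sq (O j i)).symm ▸ by ring
  rw [this, mul_one]

lemma pb_kernel {d : ℕ} (hd : 0 < d) (K : Matrix (Fin (d-1)) (Fin d) ℝ) :
    ∃ c : Fin d → ℝ, c ≠ 0 ∧ K *ᵥ c = 0 := by
  by_contra h
  push_neg at h
  have hinj : Function.Injective K.mulVecLin := by
    rw [← LinearMap.ker_eq_bot, LinearMap.ker_eq_bot']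
    intro c hc
    by_contra hc0
    exact (h c hc0) hc
  have := LinearMap.finrank_le_finrank_of_injective hinj
  simp [Module.finrank_pi] at this
  omega

lemma pb_weyl {n d : ℕ} (hd : 0 < d) (hdn : d ≤ n) (hdn' : d - 1 < n)
    (UP : Matrix (Fin n) (Fin d) ℝ) (lam : Fin d → ℝ) (hUP : UPᵀ * UP = 1)
    (hlam_dec : ∀ k l : Fin d, k ≤ l → lam l ≤ lam k)
    (P M : Matrix (Fin n) (Fin n) ℝ) (hP : P = UP * diagonal lam * UPᵀ)
    (W : Matrix (Fin n) (Fin n) ℝ) (mu : Fin n → ℝ) (hW : Wᵀ * W = 1)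
    (hmu : ∀ k l : Fin n, k ≤ l → mu l ≤ mu k)
    (hM : M = W * diagonal mu * Wᵀ) :
    lam ⟨d-1, Nat.sub_lt hd Nat.one_pos⟩ - specNorm (M - P) ≤ mu ⟨d-1, hdn'⟩ := by
  set ε := specNorm (M - P) with hεdef
  have hε0 : 0 ≤ ε := pb_spec_nonneg _
  set lamd := lam ⟨d-1, Nat.sub_lt hd Nat.one_pos⟩ with hlamddef
  set K : Matrix (Fin (d-1)) (Fin d) ℝ :=
    fun i j => ∑ k, W k ⟨i.val, lt_trans i.isLt hdn'⟩ * UP k j with hKdef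
  obtain ⟨c, hc0, hKc⟩ := pb_kernel hd K
  set x := UP *ᵥ c with hxdef
  have hxx : x ⬝ᵥ x = c ⬝ᵥ c := pb_isom UP hUP c
  have hcc : 0 < c ⬝ᵥ c := pb_dot_pos c hc0
  have hW' : W * Wᵀ = 1 := mul_eq_one_comm.mp hW
  set α := Wᵀ *ᵥ x with hαdef
  have hαα : α ⬝ᵥ α = c ⬝ᵥ c := by
    have h1 : (Wᵀ)ᵀ * Wᵀ = 1 := by rw [transpose_transpose]; exact hW'
    rw [hαdef, pb_isom Wᵀ h1 x, hxx]
  have hα0 : ∀ i : Fin n, i.val < d - 1 → α i = 0 := by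
    intro i hi
    have h := congrFun hKc ⟨i.val, hi⟩
    simp only [Pi.zero_apply] at h
    have h2 : (K *ᵥ c) ⟨i.val, hi⟩ = ∑ j, (∑ k, W k i * UP k j) * c j := by
      simp only [Matrix.mulVec, dotProduct, hKdef]
    have h3 : α i = ∑ j, (∑ k, W k i * UP k j) * c j := by
      simp only [hαdef, hxdef, Matrix.mulVec, dotProduct, transpose_apply, Finset.mul_sum,
        Finset.sum_mul]
      rw [Finset.sum_comm]
      exact Finset.sum_congr rfl fun j _ => Finset.sum_congr rfl fun k _ => by ring
    rw [h3, ← h2, h]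
  have hMx : M *ᵥ x = W *ᵥ (diagonal mu *ᵥ α) := by
    simp only [hM, hαdef, hxdef, mulVec_mulVec, Matrix.mul_assoc]
  have hquad : x ⬝ᵥ (M *ᵥ x) = ∑ i, mu i * (α i * α i) := by
    rw [hMx, dotProduct_comm, pb_dotT, ← hαdef]
    simp [dotProduct, mulVec_diagonal]
    exact Finset.sum_congr rfl fun i _ => by ring
  have hupper : x ⬝ᵥ (M *ᵥ x) ≤ mu ⟨d-1, hdn'⟩ * (c ⬝ᵥ c) := by
    rw [hquad, ← hαα]
    have hterm : ∀ i : Fin n, mu i * (α i * α i) ≤ mu ⟨d-1, hdn'⟩ * (α i * α i) := by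
      intro i
      by_cases hi : i.val < d - 1
      · rw [hα0 i hi]; simp
      · have hle : (⟨d-1, hdn'⟩ : Fin n) ≤ i := by
          rw [Fin.le_def]; simp; omega
        exact mul_le_mul_of_nonneg_right (hmu _ _ hle) (mul_self_nonneg _)
    calc ∑ i, mu i * (α i * α i) ≤ ∑ i, mu ⟨d-1, hdn'⟩ * (α i * α i) :=
          Finset.sum_le_sum fun i _ => hterm i
      _ = mu ⟨d-1, hdn'⟩ * (α ⬝ᵥ α) := by rw [← Finset.mul_sum]; rfl
  have hUPx : UPᵀ *ᵥ x = c := by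
    rw [hxdef, mulVec_mulVec, hUP, one_mulVec]
  have hPquad : x ⬝ᵥ (P *ᵥ x) = ∑ j, lam j * (c j * c j) := by
    have h1 : P *ᵥ x = UP *ᵥ (diagonal lam *ᵥ c) := by
      conv_lhs => rw [hP, hxdef]
      simp only [mulVec_mulVec, Matrix.mul_assoc, hUP, Matrix.mul_one]
    rw [h1, dotProduct_comm, pb_dotT, hUPx]
    simp [dotProduct, mulVec_diagonal]
    exact Finset.sum_congr rfl fun i _ => by ring
  have hPlb : lamd * (c ⬝ᵥ c) ≤ x ⬝ᵥ (P *ᵥ x) := by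
    rw [hPquad]
    have hterm : ∀ j : Fin d, lamd * (c j * c j) ≤ lam j * (c j * c j) := by
      intro j
      have hle : j ≤ (⟨d-1, Nat.sub_lt hd Nat.one_pos⟩ : Fin d) := by
        rw [Fin.le_def]; simp; omega
      exact mul_le_mul_of_nonneg_right (hlam_dec j _ hle) (mul_self_nonneg _)
    calc lamd * (c ⬝ᵥ c) = ∑ j, lamd * (c j * c j) := by rw [← Finset.mul_sum]; rfl
      _ ≤ ∑ j, lam j * (c j * c j) := Finset.sum_le_sum fun j _ => hterm j
  have hNlb : -(ε * (c ⬝ᵥ c)) ≤ x ⬝ᵥ ((M - P) *ᵥ x) := by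
    set t := x ⬝ᵥ ((M - P) *ᵥ x) with htdef
    have h1 : t^2 ≤ (c ⬝ᵥ c) * (ε^2 * (c ⬝ᵥ c)) := by
      calc t^2 ≤ (x ⬝ᵥ x) * (((M - P) *ᵥ x) ⬝ᵥ ((M - P) *ᵥ x)) := pb_cs _ _
        _ ≤ (x ⬝ᵥ x) * (ε^2 * (x ⬝ᵥ x)) := by
            refine mul_le_mul_of_nonneg_left ?_ (pb_dot_nonneg x)
            rw [hεdef]; exact pb_specBound _ _
        _ = (c ⬝ᵥ c) * (ε^2 * (c ⬝ᵥ c)) := by rw [hxx]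
    have habs : |t| ≤ ε * (c ⬝ᵥ c) := by
      have h2 : t^2 ≤ (ε * (c ⬝ᵥ c))^2 := by
        calc t^2 ≤ _ := h1
          _ = (ε * (c ⬝ᵥ c))^2 := by ring
      have h3 := Real.sqrt_le_sqrt h2
      rw [Real.sqrt_sq_eq_abs, Real.sqrt_sq (by positivity)] at h3
      exact h3
    linarith [neg_abs_le t]
  have hsplit : x ⬝ᵥ (M *ᵥ x) = x ⬝ᵥ (P *ᵥ x) + x ⬝ᵥ ((M - P) *ᵥ x) := by
    rw [← dotProduct_add]
    congr 1
    rw [sub_mulVec]; abel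
  have hfin : (lamd - ε) * (c ⬝ᵥ c) ≤ mu ⟨d-1, hdn'⟩ * (c ⬝ᵥ c) := by
    rw [sub_mul]; rw [hsplit] at hupper; linarith
  exact le_of_mul_le_mul_right (by linarith [hfin]) hcc

set_option maxHeartbeats 1600000 in
/-- Proposition B.1. Procrustes alignment of the product of top
eigenvector matrices: there is an orthogonal `V` with
`‖U_Pᵀ U_M − V‖_F ≤ C d ‖M − P‖² / λ_d(P)²`. -/
theorem stmt5 :
    ∃ C : ℝ, 0 < C ∧
      ∀ (n d : ℕ) (hd : 0 < d) (hdn : d ≤ n)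
        (UP : Matrix (Fin n) (Fin d) ℝ) (lam : Fin d → ℝ),
        UPᵀ * UP = 1 → (∀ k, 0 < lam k) → (∀ k l : Fin d, k ≤ l → lam l ≤ lam k) →
      ∀ lamd : ℝ, lamd = lam ⟨d - 1, Nat.sub_lt hd Nat.one_pos⟩ →
      ∀ P M : Matrix (Fin n) (Fin n) ℝ,
        P = UP * Matrix.diagonal lam * UPᵀ → Mᵀ = M →
      ∀ (W : Matrix (Fin n) (Fin n) ℝ) (mu : Fin n → ℝ),
        Wᵀ * W = 1 → (∀ k l : Fin n, k ≤ l → mu l ≤ mu k) →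
        M = W * Matrix.diagonal mu * Wᵀ →
      ∃ V : Matrix (Fin d) (Fin d) ℝ, Vᵀ * V = 1 ∧
        frobNorm (UPᵀ * topCols hdn W - V) ≤
          C * d * specNorm (M - P) ^ 2 / lamd ^ 2 := by
  refine ⟨16, by norm_num, ?_⟩
  intro n d hd hdn UP lam hUP hlampos hlamdec lamd hlamd P M hP hMsym W mu hW hmudec hM
  set UM := topCols hdn W with hUMdef
  set A := UPᵀ * UM with hAdef
  set ε := specNorm (M - P) with hεdef
  have hε0 : 0 ≤ ε := pb_spec_nonneg _
  have hlpos : 0 < lamd := by rw [hlamd]; exact hlampos _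
  have hd1 : (1:ℝ) ≤ (d:ℝ) := by exact_mod_cast hd
  -- orthonormality of the top columns
  have hUM : UMᵀ * UM = 1 := by
    ext i j
    have h1 : (UMᵀ * UM) i j = (Wᵀ * W) (Fin.castLE hdn i) (Fin.castLE hdn j) := by
      simp [Matrix.mul_apply, hUMdef, topCols, Matrix.submatrix_apply, transpose_apply]
    rw [h1, hW]
    simp [Matrix.one_apply, Fin.castLE_inj]
  -- A is a contraction
  have hAcontr : ∀ y : Fin d → ℝ, (A *ᵥ y) ⬝ᵥ (A *ᵥ y) ≤ y ⬝ᵥ y := by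
    intro y
    have h1 : A *ᵥ y = UPᵀ *ᵥ (UM *ᵥ y) := by rw [hAdef, ← mulVec_mulVec]
    have h2 := pb_proj_split UP hUP (UM *ᵥ y)
    have h3 := pb_dot_nonneg ((UM *ᵥ y) - (UP * UPᵀ) *ᵥ (UM *ᵥ y))
    have h4 : (UM *ᵥ y) ⬝ᵥ (UM *ᵥ y) = y ⬝ᵥ y := pb_isom UM hUM y
    rw [h1]; linarith
  have hAsq : ∑ i, ∑ j, (A i j)^2 ≤ (d:ℝ) := by
    rw [pb_sumsq_cols]
    calc ∑ j, (A *ᵥ Pi.single j 1) ⬝ᵥ (A *ᵥ Pi.single j 1)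
        ≤ ∑ _j : Fin d, (1:ℝ) := by
          refine Finset.sum_le_sum fun j _ => ?_
          calc (A *ᵥ Pi.single j 1) ⬝ᵥ (A *ᵥ Pi.single j 1)
              ≤ (Pi.single j 1 : Fin d → ℝ) ⬝ᵥ Pi.single j 1 := hAcontr _
            _ = 1 := pb_single_dot j
      _ = (d:ℝ) := by simp
  rcases le_or_gt (4*ε^2/lamd^2) (1/2) with hcase | hcase
  · -- main case: spectral norm small compared to the gap
    set δ := 4*ε^2/lamd^2 with hδdef
    have hδ0 : 0 ≤ δ := by positivity
    have hεle : ε ≤ lamd/2 := by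
      have h8 : 4*ε^2 ≤ (1/2) * lamd^2 := by
        rw [hδdef, div_le_iff₀ (by positivity)] at hcase; linarith
      nlinarith [hε0, hlpos]
    have hdn' : d - 1 < n := lt_of_lt_of_le (Nat.sub_lt hd Nat.one_pos) hdn
    have hWeyl : lamd - ε ≤ mu ⟨d-1, hdn'⟩ := by
      rw [hlamd, hεdef]
      exact pb_weyl hd hdn hdn' UP lam hUP hlamdec P M hP W mu hW hmudec hM
    have hmuLB : ∀ j : Fin d, lamd/2 ≤ mu (Fin.castLE hdn j) := by
      intro j
      have h1 : mu ⟨d-1, hdn'⟩ ≤ mu (Fin.castLE hdn j) := by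
        refine hmudec _ _ ?_
        rw [Fin.le_def]
        simp [Fin.castLE]
        omega
      linarith
    have hmuPos : ∀ j : Fin d, 0 < mu (Fin.castLE hdn j) :=
      fun j => lt_of_lt_of_le (by positivity) (hmuLB j)
    -- eigen-equation for the top columns
    have hMW : M * W = W * diagonal mu := by
      rw [hM]; simp only [Matrix.mul_assoc, hW, Matrix.mul_one]
    have hMUM : M * UM = UM * diagonal (fun j => mu (Fin.castLE hdn j)) := by
      ext i j
      have h1 : (M * UM) i j = (M * W) i (Fin.castLE hdn j) := by
        simp [Matrix.mul_apply, hUMdef, topCols, Matrix.submatrix_apply]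
      rw [h1, hMW, Matrix.mul_diagonal, Matrix.mul_diagonal]
      rfl
    set Q := UP * UPᵀ with hQdef
    have hQUP : Q * UP = UP := by
      rw [hQdef, Matrix.mul_assoc, hUP, Matrix.mul_one]
    have hQP : Q * P = P := by
      rw [hP, ← Matrix.mul_assoc, ← Matrix.mul_assoc, hQUP]
    set T := UM - Q * UM with hTdef
    have hQUM : Q * UM = UP * A := by rw [hQdef, Matrix.mul_assoc, hAdef]
    have hUMUP : UMᵀ * UP = Aᵀ := by rw [hAdef, transpose_mul, transpose_transpose]
    have hUPA : UPᵀ * (UP * A) = A := by rw [← Matrix.mul_assoc, hUP, Matrix.one_mul]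
    have hTS : Tᵀ * T = 1 - Aᵀ * A := by
      have e1 : UMᵀ * (UP * A) = Aᵀ * A := by rw [← Matrix.mul_assoc, hUMUP]
      have e2 : (UP*A)ᵀ * UM = Aᵀ * A := by
        rw [transpose_mul, Matrix.mul_assoc, ← hAdef]
      have e3 : (UP*A)ᵀ * (UP * A) = Aᵀ * A := by
        rw [transpose_mul, Matrix.mul_assoc, hUPA]
      rw [hTdef, hQUM]
      simp only [transpose_sub, Matrix.sub_mul, Matrix.mul_sub]
      rw [hUM, e1, e2, e3]
      abel
    -- Davis–Kahan style bound on T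
    set D : Matrix (Fin d) (Fin d) ℝ := diagonal (fun j => mu (Fin.castLE hdn j)) with hDdef
    set Dinv : Matrix (Fin d) (Fin d) ℝ := diagonal (fun j => (mu (Fin.castLE hdn j))⁻¹)
      with hDinvdef
    set F := (M - P) * UM - Q * ((M - P) * UM) with hFdef
    have hTD : T * D = F := by
      have hQPUM : Q * (P * UM) = P * UM := by rw [← Matrix.mul_assoc, hQP]
      calc T * D = UM * D - Q * (UM * D) := by
            rw [hTdef, Matrix.sub_mul, Matrix.mul_assoc]
        _ = M * UM - Q * (M * UM) := by rw [← hMUM]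
        _ = F := by
            rw [hFdef]
            simp only [Matrix.sub_mul, Matrix.mul_sub, hQPUM]
            abel
    have hDD : D * Dinv = 1 := by
      rw [hDdef, hDinvdef, diagonal_mul_diagonal]
      have : (fun j => mu (Fin.castLE hdn j) * (mu (Fin.castLE hdn j))⁻¹)
          = fun _ : Fin d => (1:ℝ) := funext fun j => mul_inv_cancel₀ (hmuPos j).ne'
      rw [this, diagonal_one]
    have hT : T = F * Dinv := by
      rw [← hTD, Matrix.mul_assoc, hDD, Matrix.mul_one]
    have hTbound : ∀ cv : Fin d → ℝ, (T *ᵥ cv) ⬝ᵥ (T *ᵥ cv) ≤ δ * (cv ⬝ᵥ cv) := by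
      intro cv
      set u := Dinv *ᵥ cv with hudef
      set w := UM *ᵥ u with hwdef
      set v := (M - P) *ᵥ w with hvdef
      have h1 : T *ᵥ cv = v - Q *ᵥ v := by
        have b1 : v = ((M - P) * UM) *ᵥ u := by
          rw [hvdef, hwdef]; exact mulVec_mulVec u (M - P) UM
        have b2 : Q *ᵥ v = (Q * ((M - P) * UM)) *ᵥ u := by
          rw [hvdef, hwdef, mulVec_mulVec u (M - P) UM]
          exact mulVec_mulVec u Q ((M - P) * UM)
        have e0 : F *ᵥ u = v - Q *ᵥ v := by
          rw [hFdef, sub_mulVec, b2, b1]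
        have e1 : T *ᵥ cv = F *ᵥ u := by
          rw [hT]; exact (mulVec_mulVec cv F Dinv).symm
        rw [e1, e0]
      have s1 : (v - Q *ᵥ v) ⬝ᵥ (v - Q *ᵥ v) ≤ v ⬝ᵥ v := by
        have h2 := pb_proj_split UP hUP v
        have h3 := pb_dot_nonneg (UPᵀ *ᵥ v)
        rw [hQdef]; linarith
      have s2 : v ⬝ᵥ v ≤ ε^2 * (w ⬝ᵥ w) := by
        rw [hvdef, hεdef]; exact pb_specBound _ _
      have s3 : w ⬝ᵥ w = u ⬝ᵥ u := pb_isom UM hUM u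
      have s4 : u ⬝ᵥ u ≤ (2/lamd)^2 * (cv ⬝ᵥ cv) := by
        have hterm : ∀ j : Fin d, u j * u j ≤ (2/lamd)^2 * (cv j * cv j) := by
          intro j
          have hu : u j = (mu (Fin.castLE hdn j))⁻¹ * cv j := by
            rw [hudef, hDinvdef]; exact mulVec_diagonal _ _ _
          have ha0 : 0 ≤ (mu (Fin.castLE hdn j))⁻¹ := inv_nonneg.mpr (hmuPos j).le
          have hab : (mu (Fin.castLE hdn j))⁻¹ ≤ 2/lamd := by
            rw [show (2:ℝ)/lamd = (lamd/2)⁻¹ by rw [inv_div]]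
            exact inv_anti₀ (by positivity) (hmuLB j)
          rw [hu]
          nlinarith [mul_nonneg (mul_nonneg (sub_nonneg.mpr hab)
            (by linarith : (0:ℝ) ≤ (mu (Fin.castLE hdn j))⁻¹ + 2/lamd))
            (mul_self_nonneg (cv j))]
        calc u ⬝ᵥ u = ∑ j, u j * u j := rfl
          _ ≤ ∑ j, (2/lamd)^2 * (cv j * cv j) := Finset.sum_le_sum fun j _ => hterm j
          _ = (2/lamd)^2 * (cv ⬝ᵥ cv) := by rw [← Finset.mul_sum]; rfl
      have hdd : ε^2 * ((2/lamd)^2 * (cv ⬝ᵥ cv)) = δ * (cv ⬝ᵥ cv) := by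
        rw [hδdef]; field_simp; ring
      calc (T *ᵥ cv) ⬝ᵥ (T *ᵥ cv) = (v - Q *ᵥ v) ⬝ᵥ (v - Q *ᵥ v) := by rw [h1]
        _ ≤ v ⬝ᵥ v := s1
        _ ≤ ε^2 * (w ⬝ᵥ w) := s2
        _ = ε^2 * (u ⬝ᵥ u) := by rw [s3]
        _ ≤ ε^2 * ((2/lamd)^2 * (cv ⬝ᵥ cv)) :=
            mul_le_mul_of_nonneg_left s4 (by positivity)
        _ = δ * (cv ⬝ᵥ cv) := hdd
    -- spectral decomposition of S = AᵀA
    set S := Aᵀ * A with hSdef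
    have hSsym : S.IsHermitian := by
      rw [Matrix.IsHermitian]
      have : Sᵀ = S := by rw [hSdef, transpose_mul, transpose_transpose]
      simpa using this
    set O : Matrix (Fin d) (Fin d) ℝ := (hSsym.eigenvectorUnitary : Matrix (Fin d) (Fin d) ℝ)
      with hOdef
    set s : Fin d → ℝ := hSsym.eigenvalues with hsdef
    have hSpec : S = O * diagonal s * Oᵀ := by
      have h := hSsym.spectral_theorem
      simpa [Matrix.star_eq_conjTranspose, Matrix.conjTranspose_eq_transpose_of_trivial] using h
    have hO1 : Oᵀ * O = 1 := by
      have h := Unitary.star_mul_self hSsym.eigenvectorUnitary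
      have h2 : star (hSsym.eigenvectorUnitary : Matrix (Fin d) (Fin d) ℝ)
          * (hSsym.eigenvectorUnitary : Matrix (Fin d) (Fin d) ℝ) = 1 :=
        congrArg Subtype.val h
      rw [hOdef, ← Matrix.conjTranspose_eq_transpose_of_trivial, ← Matrix.star_eq_conjTranspose]
      exact h2
    have hO2 : O * Oᵀ = 1 := mul_eq_one_comm.mp hO1
    have hsbound : ∀ i, 1 - δ ≤ s i ∧ s i ≤ 1 := by
      intro i
      set o := O *ᵥ Pi.single i 1 with hodef
      have hoo : o ⬝ᵥ o = 1 := by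
        rw [hodef, pb_isom O hO1]; exact pb_single_dot i
      have hSO : S * O = O * diagonal s := by
        rw [hSpec, Matrix.mul_assoc (O * diagonal s) Oᵀ O, hO1, Matrix.mul_one]
      have hSo : S *ᵥ o = s i • o := by
        rw [hodef, mulVec_mulVec, hSO, ← mulVec_mulVec, diagonal_mulVec_single]
        have : Pi.single i (s i * 1) = s i • (Pi.single i 1 : Fin d → ℝ) := by
          rw [mul_one, ← Pi.single_smul, smul_eq_mul, mul_one]
        rw [this, mulVec_smul]
      have h1s : 1 - s i = (T *ᵥ o) ⬝ᵥ (T *ᵥ o) := by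
        have e1 : o ⬝ᵥ ((1 - S) *ᵥ o) = 1 - s i := by
          rw [sub_mulVec, one_mulVec, hSo, dotProduct_sub, hoo, dotProduct_smul,
            smul_eq_mul, hoo, mul_one]
        have e2 : o ⬝ᵥ ((1 - S) *ᵥ o) = (T *ᵥ o) ⬝ᵥ (T *ᵥ o) := by
          rw [← hTS, ← mulVec_mulVec, ← pb_dotT]
        rw [← e1, e2]
      have hb := hTbound o
      rw [hoo, mul_one] at hb
      have hnn := pb_dot_nonneg (T *ᵥ o)
      have hb' : 1 - s i ≤ δ := by rw [h1s]; exact hb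
      have hnn' : 0 ≤ 1 - s i := by rw [h1s]; exact hnn
      exact ⟨by linarith, by linarith⟩
    have hshalf : ∀ i, 1/2 ≤ s i := fun i => by
      have := (hsbound i).1; linarith [hcase]
    have hs1 : ∀ i, s i ≤ 1 := fun i => (hsbound i).2
    -- polar-type orthogonal factor
    set r : Fin d → ℝ := fun i => (Real.sqrt (s i))⁻¹ with hrdef
    set R := O * diagonal r * Oᵀ with hRdef
    refine ⟨A * R, ?_, ?_⟩
    · -- orthogonality
      have hRT : Rᵀ = R := by
        rw [hRdef]
        simp only [transpose_mul, transpose_transpose, diagonal_transpose, Matrix.mul_assoc]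
      have hRSR : R * S * R = 1 := by
        rw [hSpec, hRdef, pb_conjMul O hO1, pb_conjMul O hO1]
        have : (fun i => r i * s i * r i) = fun _ : Fin d => (1:ℝ) := by
          funext i
          have hs0 : (0:ℝ) < s i := lt_of_lt_of_le (by norm_num) (hshalf i)
          have hsq : Real.sqrt (s i) * Real.sqrt (s i) = s i := Real.mul_self_sqrt hs0.le
          have hsqne : Real.sqrt (s i) ≠ 0 := by positivity
          rw [hrdef]
          field_simp
          rw [sq, hsq]
        rw [this, diagonal_one, Matrix.mul_one, hO2]
      calc (A * R)ᵀ * (A * R) = Rᵀ * (Aᵀ * A) * R := by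
            simp only [transpose_mul, Matrix.mul_assoc]
        _ = R * S * R := by rw [hRT, hSdef, Matrix.mul_assoc]
        _ = 1 := hRSR
    · -- the Frobenius bound
      set Bm := O * diagonal (fun i => 1 - r i) * Oᵀ with hBmdef
      have h1mr : Bm = 1 - R := by
        have e : diagonal (fun i => 1 - r i) = 1 - diagonal r := by
          ext a b
          by_cases hab : a = b <;> simp [Matrix.diagonal_apply, Matrix.one_apply, hab]
        rw [hBmdef, e, Matrix.mul_sub, Matrix.mul_one, Matrix.sub_mul, hO2, hRdef]
      have hAmV : A - A * R = A * Bm := by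
        rw [h1mr, Matrix.mul_sub, Matrix.mul_one]
      have p1 : ∑ i, ∑ j, ((A * Bm) i j)^2 ≤ ∑ i, ∑ j, (Bm i j)^2 := by
        rw [pb_sumsq_cols (A * Bm), pb_sumsq_cols Bm]
        refine Finset.sum_le_sum fun j _ => ?_
        have h1 : (A * Bm) *ᵥ Pi.single j 1 = A *ᵥ (Bm *ᵥ Pi.single j 1) := by
          rw [mulVec_mulVec]
        rw [h1]
        exact hAcontr _
      have p2 : ∑ i, ∑ j, (Bm i j)^2 = ∑ i, (1 - r i)^2 := pb_conj_sumsq O hO1 _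
      have p3 : ∀ i, (1 - r i)^2 ≤ 2 * (1 - s i)^2 := by
        intro i
        have hs0 : (0:ℝ) < s i := lt_of_lt_of_le (by norm_num) (hshalf i)
        set t := Real.sqrt (s i) with htdef
        have ht2 : t * t = s i := Real.mul_self_sqrt hs0.le
        have ht0 : 0 < t := Real.sqrt_pos.mpr hs0
        have htle : t ≤ 1 := by
          rw [htdef]
          calc Real.sqrt (s i) ≤ Real.sqrt 1 := Real.sqrt_le_sqrt (hs1 i)
            _ = 1 := Real.sqrt_one
        have hr : r i = t⁻¹ := rfl
        have he : 1 - r i = (t - 1)/t := by rw [hr]; field_simp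
        rw [he, div_pow, div_le_iff₀ (by positivity)]
        nlinarith [sq_nonneg (1 - t), sq_nonneg (1 + t), hshalf i, ht2, htle, ht0.le,
          mul_nonneg (sq_nonneg (1 - t)) (sq_nonneg (1 + t))]
      have psum : ∑ i, (1 - s i) ≤ (d:ℝ) * δ := by
        calc ∑ i, (1 - s i) ≤ ∑ _i : Fin d, δ :=
              Finset.sum_le_sum fun i _ => by linarith [(hsbound i).1]
          _ = (d:ℝ) * δ := by simp [mul_comm]
      have psumnn : ∀ i, 0 ≤ 1 - s i := fun i => by linarith [hs1 i]
      have p4 : ∑ i, (1 - s i)^2 ≤ ((d:ℝ) * δ)^2 := by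
        calc ∑ i, (1 - s i)^2 ≤ (∑ i, (1 - s i))^2 := pb_sum_sq_le_sq_sum _ psumnn
          _ ≤ ((d:ℝ) * δ)^2 := by
              have h0 : 0 ≤ ∑ i, (1 - s i) := Finset.sum_nonneg fun i _ => psumnn i
              nlinarith [psum]
      have hfull : ∑ i, ∑ j, ((A - A * R) i j)^2 ≤ (2 * (d:ℝ) * δ)^2 := by
        rw [hAmV]
        calc ∑ i, ∑ j, ((A * Bm) i j)^2 ≤ ∑ i, (1 - r i)^2 := by rw [← p2]; exact p1
          _ ≤ ∑ i, 2 * (1 - s i)^2 := Finset.sum_le_sum fun i _ => p3 i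
          _ = 2 * ∑ i, (1 - s i)^2 := by rw [Finset.mul_sum]
          _ ≤ 2 * ((d:ℝ) * δ)^2 := by linarith [p4]
          _ ≤ (2 * (d:ℝ) * δ)^2 := by nlinarith [mul_nonneg (Nat.cast_nonneg d : (0:ℝ) ≤ d) hδ0]
      have hfr : frobNorm (A - A * R) ≤ 2 * (d:ℝ) * δ :=
        pb_frob_le _ _ (by positivity) hfull
      calc frobNorm (A - A * R) ≤ 2 * (d:ℝ) * δ := hfr
        _ ≤ 16 * (d:ℝ) * ε^2 / lamd^2 := by
            rw [hδdef]
            have e1 : 2 * (d:ℝ) * (4*ε^2/lamd^2) = 8 * (d:ℝ) * (ε^2/lamd^2) := by ring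
            have e2 : 16 * (d:ℝ) * ε^2 / lamd^2 = 16 * (d:ℝ) * (ε^2/lamd^2) := by ring
            rw [e1, e2]
            have hz : (0:ℝ) ≤ ε^2/lamd^2 := by positivity
            nlinarith [mul_nonneg (Nat.cast_nonneg d : (0:ℝ) ≤ (d:ℝ)) hz]
  · -- degenerate case: perturbation comparable to the gap; take V = 1
    refine ⟨1, by simp, ?_⟩
    have hIsq : ∑ i, ∑ j, (((1:Matrix (Fin d) (Fin d) ℝ)) i j)^2 = (d:ℝ) := by
      have hterm : ∀ i j : Fin d, (((1:Matrix (Fin d) (Fin d) ℝ)) i j)^2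
          = if j = i then (1:ℝ) else 0 := by
        intro i j
        by_cases hij : i = j <;> simp [Matrix.one_apply, hij, eq_comm]
      calc ∑ i, ∑ j, (((1:Matrix (Fin d) (Fin d) ℝ)) i j)^2
          = ∑ i : Fin d, ∑ j, if j = i then (1:ℝ) else 0 :=
            Finset.sum_congr rfl fun i _ => Finset.sum_congr rfl fun j _ => hterm i j
        _ = ∑ _i : Fin d, (1:ℝ) := by
            refine Finset.sum_congr rfl fun i _ => ?_
            rw [Finset.sum_ite_eq' Finset.univ i (fun _ => (1:ℝ))]
            simp
        _ = (d:ℝ) := by simp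
    have h4d : ∑ i, ∑ j, ((A - 1) i j)^2 ≤ 4 * (d:ℝ) := by
      have hterm : ∀ i j : Fin d, ((A - 1) i j)^2
          ≤ 2 * (A i j)^2 + 2 * (((1:Matrix (Fin d) (Fin d) ℝ)) i j)^2 := by
        intro i j
        rw [Matrix.sub_apply]
        nlinarith [sq_nonneg (A i j + (1:Matrix (Fin d) (Fin d) ℝ) i j)]
      calc ∑ i, ∑ j, ((A - 1) i j)^2
          ≤ ∑ i, ∑ j, (2 * (A i j)^2 + 2 * (((1:Matrix (Fin d) (Fin d) ℝ)) i j)^2) :=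
            Finset.sum_le_sum fun i _ => Finset.sum_le_sum fun j _ => hterm i j
        _ = 2 * (∑ i, ∑ j, (A i j)^2) + 2 * (∑ i, ∑ j, (((1:Matrix (Fin d) (Fin d) ℝ)) i j)^2) := by
            simp [Finset.sum_add_distrib, Finset.mul_sum]
        _ ≤ 4 * (d:ℝ) := by rw [hIsq]; linarith [hAsq]
    have hfr : frobNorm (A - 1) ≤ 2 * (d:ℝ) :=
      pb_frob_le _ _ (by positivity) (by nlinarith [h4d, hd1])
    calc frobNorm (A - 1) ≤ 2 * (d:ℝ) := hfr
      _ ≤ 16 * (d:ℝ) * ε^2 / lamd^2 := by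
          have hc2 : (1:ℝ)/2 ≤ 4*ε^2/lamd^2 := le_of_lt hcase
          calc 2 * (d:ℝ) = 4 * (d:ℝ) * (1/2) := by ring
            _ ≤ 4 * (d:ℝ) * (4*ε^2/lamd^2) :=
                mul_le_mul_of_nonneg_left hc2 (by positivity)
            _ = 16 * (d:ℝ) * ε^2 / lamd^2 := by ring
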